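/- arXiv:2508.15198 — 3 statements merged into one kernel-verified Lean document; each statement's English description precedes it below -/
import Mathlib

section
/- Let C0 and C1 be bounded positive real constants, let C2 be a nonzero real number, and let C3 be a real number. Then the limit, as δ → 0⁺, of μ({ w ∈ [−δ, δ] : |exp(C1/|w|) · cos(C2/w + C3)| ≥ C0 }) / (2δ) equals 1, where μ denotes the Lebesgue measure on ℝ. -/
open MeasureTheory Filter Real


lemma jordan_core {s : ℝ} (hs2 : |s| ≤ π/2) : 2/π * |s| ≤ |Real.sin s| := by
  have hπ := Real.pi_pos
  have hsa : s ≤ π/2 := le_trans (le_abs_self s) hs2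
  have hsb : -(π/2) ≤ s := by have := neg_abs_le s; linarith
  rcases le_or_gt 0 s with h | h
  · have h4 : s ≤ π := by linarith
    rw [abs_of_nonneg h, abs_of_nonneg (Real.sin_nonneg_of_nonneg_of_le_pi h h4)]
    exact Real.mul_le_sin h hsa
  · have h1 : 0 ≤ -s := by linarith
    have h2 : -s ≤ π/2 := by linarith
    have h3 : |Real.sin s| = Real.sin (-s) := by
      rw [Real.sin_neg, abs_of_nonpos]
      have := Real.sin_nonneg_of_nonneg_of_le_pi h1 (by linarith)
      rw [Real.sin_neg] at this; linarith
    rw [abs_of_neg h, h3]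
    exact Real.mul_le_sin h1 h2

lemma jordan_aux (t : ℝ) : ∃ k : ℤ, |t - (π/2 + k*π)| ≤ π/2 * |Real.cos t| := by
  have hπ := Real.pi_pos
  refine ⟨round ((t - π/2)/π), ?_⟩
  have key : ∀ s : ℝ, ∀ k : ℤ, t = (s + π/2) + k*π → |s| ≤ π/2 →
      |t - (π/2 + k*π)| ≤ π/2 * |Real.cos t| := by
    intro s k ht hs2
    have hc : |Real.cos t| = |Real.sin s| := by
      rw [ht, Real.cos_add_int_mul_pi, Real.cos_add_pi_div_two]
      rcases Int.even_or_odd k with he | ho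
      · rw [he.neg_one_zpow]; simp
      · rw [ho.neg_one_zpow]; simp
    have hts : t - (π/2 + k*π) = s := by rw [ht]; ring
    rw [hc, hts]
    have hj := jordan_core hs2
    have key := mul_le_mul_of_nonneg_left hj (le_of_lt (half_pos hπ))
    have heq : π/2 * (2/π * |s|) = |s| := by field_simp
    linarith
  apply key (t - (π/2 + (round ((t - π/2)/π) : ℤ)*π)) _ (by ring)
  have h := abs_sub_round ((t - π/2)/π)
  have heq : t - (π/2 + (round ((t - π/2)/π) : ℤ)*π) = π * ((t - π/2)/π - round ((t - π/2)/π)) := by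
    field_simp; ring
  rw [heq, abs_mul, abs_of_pos hπ]
  nlinarith


lemma div_mem_uIcc_pos {C2 a b t : ℝ} (ha : 0 < a) (h1 : a ≤ t) (h2 : t ≤ b) :
    C2/t ∈ Set.uIcc (C2/a) (C2/b) := by
  have hat : 0 < t := lt_of_lt_of_le ha h1
  have hb : 0 < b := lt_of_lt_of_le hat h2
  rw [Set.mem_uIcc]
  rcases le_or_gt 0 C2 with hC | hC
  · right
    constructor
    · rw [div_le_div_iff₀ hb hat]; nlinarith
    · rw [div_le_div_iff₀ hat ha]; nlinarith
  · left
    constructor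
    · rw [div_le_div_iff₀ ha hat]; nlinarith
    · rw [div_le_div_iff₀ hat hb]; nlinarith

lemma div_mem_uIcc {C2 a r t : ℝ} (hr : 0 < r) (hra : r < |a|) (h1 : a - r ≤ t) (h2 : t ≤ a + r) :
    C2/t ∈ Set.uIcc (C2/(a - r)) (C2/(a + r)) := by
  rcases le_or_gt 0 a with ha | ha
  · exact div_mem_uIcc_pos (by rw [abs_of_nonneg ha] at hra; linarith) h1 h2
  · have hra' : r < -a := by rwa [abs_of_neg ha] at hra
    have h := div_mem_uIcc_pos (C2 := -C2) (a := -(a+r)) (b := -(a-r)) (t := -t) (by linarith)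
      (by linarith) (by linarith)
    rw [neg_div_neg_eq, neg_div_neg_eq, neg_div_neg_eq] at h
    rw [Set.uIcc_comm]
    exact h

-- containment of the bad slice
lemma slice_subset {C2 a r δ : ℝ} (hr : 0 < r) (hra : r < |a|) :
    {w : ℝ | w ≠ 0 ∧ |w| ≤ δ ∧ a - r < C2/w ∧ C2/w < a + r} ⊆
      Set.uIcc (C2/(a - r)) (C2/(a + r)) := by
  rintro w ⟨hw0, -, h1, h2⟩
  have hsign : 0 < a - r ∨ a + r < 0 := by
    rcases le_or_gt 0 a with ha | ha
    · left; rw [abs_of_nonneg ha] at hra; linarith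
    · right; rw [abs_of_neg ha] at hra; linarith
  have ht0 : C2/w ≠ 0 := by
    rcases hsign with h | h
    · intro hh; rw [hh] at h1; linarith
    · intro hh; rw [hh] at h2; linarith
  have hC2 : C2 ≠ 0 := fun h => ht0 (by simp [h])
  have hw : w = C2/(C2/w) := by field_simp
  rw [hw]
  exact div_mem_uIcc hr hra h1.le h2.le


lemma summable_int_inv_sq_add_one : Summable (fun k : ℤ => (((k:ℝ))^2+1)⁻¹) := by
  have sumShift : Summable (fun n : ℕ => (((n:ℝ)+1)^2)⁻¹) := by
    have h0 : Summable (fun n : ℕ => 1/((n:ℝ))^2) :=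
      Real.summable_one_div_nat_pow.mpr one_lt_two
    have h1 := (summable_nat_add_iff 1).mpr h0
    exact h1.congr fun n => by push_cast; rw [one_div]
  have sumNat : Summable (fun n : ℕ => (((n:ℝ))^2+1)⁻¹) := by
    apply Summable.of_nonneg_of_le (fun n => by positivity) (fun n => ?_) (sumShift.mul_left 2)
    have h2 : ((n:ℝ)+1)^2/2 ≤ (n:ℝ)^2+1 := by nlinarith [sq_nonneg ((n:ℝ)-1)]
    calc ((n:ℝ)^2+1)⁻¹ ≤ (((n:ℝ)+1)^2/2)⁻¹ := by
          apply inv_anti₀ (by positivity) h2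
      _ = 2 * (((n:ℝ)+1)^2)⁻¹ := by rw [inv_div, div_eq_mul_inv]
  exact Summable.of_nat_of_neg sumNat (sumNat.congr fun n => by push_cast; ring_nf)

lemma summable_g (c A₀ : ℝ) (hA₀ : 2 ≤ A₀) :
    Summable (fun k : ℤ => if A₀ ≤ |c + k*π| then ((c + k*π)^2 - 1)⁻¹ else 0) := by
  have hC₄pos : (0:ℝ) < 4/3*(2/9 + (2*c^2/9+1)/4) := by positivity
  apply Summable.of_nonneg_of_le (f := fun k : ℤ => (4/3*(2/9 + (2*c^2/9+1)/4)) * (((k:ℝ))^2+1)⁻¹)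
    (fun k => ?_) (fun k => ?_) (summable_int_inv_sq_add_one.mul_left _)
  · by_cases h : A₀ ≤ |c + k*π|
    · rw [if_pos h]
      have h2 : 2 ≤ |c + k*π| := le_trans hA₀ h
      have ha4 : 4 ≤ (c + k*π)^2 := by nlinarith [sq_abs (c + k*π), abs_nonneg (c + k*π)]
      have : (0:ℝ) < (c + k*π)^2 - 1 := by linarith
      exact le_of_lt (inv_pos.mpr this)
    · rw [if_neg h]
  · by_cases h : A₀ ≤ |c + k*π|
    · rw [if_pos h]
      have hπ3 : 3 < π := Real.pi_gt_three
      have h2 : 2 ≤ |c + k*π| := le_trans hA₀ h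
      have ha4 : 4 ≤ (c + k*π)^2 := by nlinarith [sq_abs (c + k*π), abs_nonneg (c + k*π)]
      have hπ9 : 9 ≤ π^2 := by nlinarith
      have hk9 : (k:ℝ)^2 * 9 ≤ 2*(c + k*π)^2 + 2*c^2 := by
        nlinarith [sq_nonneg ((k:ℝ)*π + 2*c), mul_le_mul_of_nonneg_left hπ9 (sq_nonneg (k:ℝ))]
      have hpos1 : (0:ℝ) < (c + k*π)^2 - 1 := by linarith
      have hpos2 : (0:ℝ) < (k:ℝ)^2 + 1 := by positivity
      rw [inv_eq_one_div, ← div_eq_mul_inv, div_le_div_iff₀ hpos1 hpos2]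
      nlinarith [mul_le_mul_of_nonneg_left ha4 (sq_nonneg c)]
    · rw [if_neg h]; positivity


set_option maxHeartbeats 1600000 in
theorem stmt_0 (C0 C1 C2 C3 : ℝ) (hC0 : 0 < C0) (hC1 : 0 < C1) (hC2 : C2 ≠ 0) :
    Tendsto
      (fun δ : ℝ =>
        (volume {w : ℝ | w ∈ Set.Icc (-δ) δ ∧
          C0 ≤ |Real.exp (C1 / |w|) * Real.cos (C2 / w + C3)|}).toReal / (2 * δ))
      (nhdsWithin 0 (Set.Ioi 0)) (nhds 1) := by
  have hπ := Real.pi_pos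
  have hC2' : 0 < |C2| := abs_pos.mpr hC2
  -- measurability
  have hfm : Measurable fun w : ℝ => |Real.exp (C1 / |w|) * Real.cos (C2 / w + C3)| := by
    apply Measurable.abs
    apply Measurable.mul
    · exact (measurable_const.div measurable_abs).exp
    · exact ((measurable_const.div measurable_id).add measurable_const).cos
  have hBadMeas : ∀ δ : ℝ, MeasurableSet {w : ℝ | w ∈ Set.Icc (-δ) δ ∧
      |Real.exp (C1 / |w|) * Real.cos (C2 / w + C3)| < C0} := by
    intro δ
    exact measurableSet_Icc.inter (measurableSet_lt hfm measurable_const)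
  have hBadsub : ∀ δ : ℝ, {w : ℝ | w ∈ Set.Icc (-δ) δ ∧
      |Real.exp (C1 / |w|) * Real.cos (C2 / w + C3)| < C0} ⊆ Set.Icc (-δ) δ :=
    fun δ w hw => hw.1
  have hBadfin : ∀ δ : ℝ, volume {w : ℝ | w ∈ Set.Icc (-δ) δ ∧
      |Real.exp (C1 / |w|) * Real.cos (C2 / w + C3)| < C0} ≠ ⊤ := by
    intro δ
    refine ne_top_of_le_ne_top ?_ (measure_mono (hBadsub δ))
    rw [Real.volume_Icc]
    exact ENNReal.ofReal_ne_top
  -- choice of δ₀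
  obtain ⟨δ₀, hδ₀pos, hδ₀C2, hδ₀exp⟩ : ∃ δ₀ : ℝ, 0 < δ₀ ∧ δ₀ ≤ |C2|/3 ∧
      π/2*(C0*Real.exp (-C1/δ₀)) ≤ 1 := by
    have hM : (0:ℝ) ≤ max 0 (Real.log (π*C0/2)) := le_max_left _ _
    have hM1 : (0:ℝ) < 1 + max 0 (Real.log (π*C0/2)) := by linarith
    refine ⟨min (|C2|/3) (C1/(1 + max 0 (Real.log (π*C0/2)))), ?_, min_le_left _ _, ?_⟩
    · apply lt_min (by positivity) (by positivity)
    · have hd : min (|C2|/3) (C1/(1 + max 0 (Real.log (π*C0/2)))) ≤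
          C1/(1 + max 0 (Real.log (π*C0/2))) := min_le_right _ _
      have hdpos : (0:ℝ) < min (|C2|/3) (C1/(1 + max 0 (Real.log (π*C0/2)))) :=
        lt_min (by positivity) (by positivity)
      have h1 : 1 + max 0 (Real.log (π*C0/2)) ≤
          C1 / min (|C2|/3) (C1/(1 + max 0 (Real.log (π*C0/2)))) := by
        rw [le_div_iff₀ hdpos]
        calc (1 + max 0 (Real.log (π*C0/2))) * min (|C2|/3) (C1/(1 + max 0 (Real.log (π*C0/2))))
            ≤ (1 + max 0 (Real.log (π*C0/2))) * (C1/(1 + max 0 (Real.log (π*C0/2)))) := by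
              apply mul_le_mul_of_nonneg_left hd (le_of_lt hM1)
          _ = C1 := by field_simp
      have h2 : Real.log (π*C0/2) ≤ max 0 (Real.log (π*C0/2)) := le_max_right _ _
      have h3 : -C1 / min (|C2|/3) (C1/(1 + max 0 (Real.log (π*C0/2)))) ≤ -Real.log (π*C0/2) := by
        rw [neg_div]; linarith
      have h4 : Real.exp (-C1 / min (|C2|/3) (C1/(1 + max 0 (Real.log (π*C0/2)))))
          ≤ (π*C0/2)⁻¹ := by
        calc Real.exp _ ≤ Real.exp (-Real.log (π*C0/2)) := Real.exp_le_exp.mpr h3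
          _ = (π*C0/2)⁻¹ := by rw [Real.exp_neg, Real.exp_log (by positivity)]
      calc π/2*(C0*Real.exp (-C1 / min (|C2|/3) (C1/(1 + max 0 (Real.log (π*C0/2)))))) ≤
          π/2*(C0*(π*C0/2)⁻¹) := by
            apply mul_le_mul_of_nonneg_left (mul_le_mul_of_nonneg_left h4 (le_of_lt hC0)) (by positivity)
        _ = 1 := by field_simp

  obtain ⟨A₀, hA₀⟩ : ∃ A₀ : ℝ, A₀ = |C2|/δ₀ - 1 := ⟨_, rfl⟩
  have hA₀2 : 2 ≤ A₀ := by
    have h3 : 3 ≤ |C2|/δ₀ := (le_div_iff₀ hδ₀pos).mpr (by linarith)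
    linarith
  have hgs := summable_g (π/2 - C3) A₀ hA₀2
  obtain ⟨K, hK⟩ : ∃ K : ℝ, K = ∑' k : ℤ,
      (if A₀ ≤ |(π/2 - C3) + k*π| then (((π/2 - C3) + k*π)^2 - 1)⁻¹ else 0) := ⟨_, rfl⟩
  have hgnn : ∀ k : ℤ, 0 ≤ if A₀ ≤ |π/2 - C3 + k*π| then ((π/2 - C3 + k*π)^2 - 1)⁻¹ else 0 := by
    intro k
    by_cases h : A₀ ≤ |π/2 - C3 + k*π|
    · rw [if_pos h]
      have h2 : 2 ≤ |π/2 - C3 + k*π| := le_trans hA₀2 h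
      have : (0:ℝ) < (π/2 - C3 + k*π)^2 - 1 := by
        nlinarith [sq_abs (π/2 - C3 + k*π), abs_nonneg (π/2 - C3 + k*π)]
      exact le_of_lt (inv_pos.mpr this)
    · rw [if_neg h]
  have hK0 : 0 ≤ K := by
    rw [hK]
    exact tsum_nonneg hgnn
  -- the key measure bound
  have key2 : ∀ δ : ℝ, 0 < δ → δ ≤ δ₀ →
      (volume {w : ℝ | w ∈ Set.Icc (-δ) δ ∧
        |Real.exp (C1 / |w|) * Real.cos (C2 / w + C3)| < C0}).toReal
        ≤ π * C0 * Real.exp (-C1/δ) * |C2| * K := by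
    intro δ hδ hδδ₀
    obtain ⟨r, hr⟩ : ∃ r : ℝ, r = π/2*(C0*Real.exp (-C1/δ)) := ⟨_, rfl⟩
    have hrpos : 0 < r := by rw [hr]; positivity
    have hr1 : r ≤ 1 := by
      have hdd : C1/δ₀ ≤ C1/δ := by
        rw [div_le_div_iff₀ hδ₀pos hδ]; nlinarith
      have hee : Real.exp (-C1/δ) ≤ Real.exp (-C1/δ₀) := by
        apply Real.exp_le_exp.mpr; rw [neg_div, neg_div]; linarith
      calc r = π/2*(C0*Real.exp (-C1/δ)) := hr
        _ ≤ π/2*(C0*Real.exp (-C1/δ₀)) := by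
            apply mul_le_mul_of_nonneg_left (mul_le_mul_of_nonneg_left hee (le_of_lt hC0)) (by positivity)
        _ ≤ 1 := hδ₀exp
    -- the cover
    have cover : {w : ℝ | w ∈ Set.Icc (-δ) δ ∧
        |Real.exp (C1 / |w|) * Real.cos (C2 / w + C3)| < C0} ⊆
        {(0:ℝ)} ∪ ⋃ k : ℤ, {w : ℝ | w ≠ 0 ∧ |w| ≤ δ ∧
          (π/2 - C3 + k*π) - r < C2/w ∧ C2/w < (π/2 - C3 + k*π) + r} := by
      rintro w ⟨hwIcc, hwlt⟩
      by_cases hw0 : w = 0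
      · left; simp [hw0]
      right
      simp only [Set.mem_iUnion, Set.mem_setOf_eq]
      have hwabs : |w| ≤ δ := abs_le.mpr (Set.mem_Icc.mp hwIcc)
      have hwpos : 0 < |w| := abs_pos.mpr hw0
      have hle : C1/δ ≤ C1/|w| := by
        rw [div_le_div_iff₀ hδ hwpos]; nlinarith
      have h5 : Real.exp (C1/|w|) * |Real.cos (C2/w + C3)| < C0 := by
        rwa [abs_mul, abs_of_pos (Real.exp_pos _)] at hwlt
      have h6 : |Real.cos (C2/w + C3)| < C0 * Real.exp (-C1/δ) := by
        have e1 : |Real.cos (C2/w + C3)| < C0 / Real.exp (C1/|w|) :=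
          (lt_div_iff₀ (Real.exp_pos _)).mpr (by linarith [h5, mul_comm (Real.exp (C1/|w|)) |Real.cos (C2/w + C3)|])
        have e2 : C0 / Real.exp (C1/|w|) ≤ C0 / Real.exp (C1/δ) := by
          apply div_le_div_of_nonneg_left (le_of_lt hC0) (Real.exp_pos _) (Real.exp_le_exp.mpr hle)
        rw [neg_div, Real.exp_neg, ← div_eq_mul_inv]
        linarith
      obtain ⟨k, hk⟩ := jordan_aux (C2/w + C3)
      have heq : C2/w + C3 - (π/2 + k*π) = C2/w - (π/2 - C3 + k*π) := by ring
      rw [heq] at hk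
      have habs : |C2/w - (π/2 - C3 + k*π)| < r := by
        calc |C2/w - (π/2 - C3 + k*π)| ≤ π/2 * |Real.cos (C2/w + C3)| := hk
          _ < π/2 * (C0 * Real.exp (-C1/δ)) := by
              apply mul_lt_mul_of_pos_left h6 (by positivity)
          _ = r := hr.symm
      obtain ⟨hl, hu⟩ := abs_lt.mp habs
      exact ⟨k, hw0, hwabs, by linarith, by linarith⟩
    -- per-interval bound
    have bnd : ∀ k : ℤ, volume {w : ℝ | w ≠ 0 ∧ |w| ≤ δ ∧
        (π/2 - C3 + k*π) - r < C2/w ∧ C2/w < (π/2 - C3 + k*π) + r} ≤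
        ENNReal.ofReal (2*r*|C2| *
          (if A₀ ≤ |π/2 - C3 + k*π| then ((π/2 - C3 + k*π)^2 - 1)⁻¹ else 0)) := by
      intro k
      obtain ⟨a, ha⟩ : ∃ a : ℝ, a = π/2 - C3 + (k:ℝ)*π := ⟨_, rfl⟩
      rw [← ha]
      by_cases hP : A₀ ≤ |a|
      · rw [if_pos hP]
        have h2A : 2 ≤ |a| := le_trans hA₀2 hP
        have hra : r < |a| := by linarith
        have ha4 : 4 ≤ a^2 := by nlinarith [sq_abs a, abs_nonneg a]
        have hr2 : r^2 < a^2 := by nlinarith [sq_abs a, abs_nonneg a]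
        have hne1 : a + r ≠ 0 := by
          rcases le_or_gt 0 a with h | h
          · rw [abs_of_nonneg h] at hra; intro hh; linarith
          · rw [abs_of_neg h] at hra; intro hh; linarith
        have hne2 : a - r ≠ 0 := by
          rcases le_or_gt 0 a with h | h
          · rw [abs_of_nonneg h] at hra; intro hh; linarith
          · rw [abs_of_neg h] at hra; intro hh; linarith
        calc volume {w : ℝ | w ≠ 0 ∧ |w| ≤ δ ∧ a - r < C2/w ∧ C2/w < a + r}
            ≤ volume (Set.uIcc (C2/(a - r)) (C2/(a + r))) :=
              measure_mono (slice_subset hrpos hra)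
          _ = ENNReal.ofReal |C2/(a + r) - C2/(a - r)| := Real.volume_interval
          _ ≤ ENNReal.ofReal (2*r*|C2| * (a^2 - 1)⁻¹) := by
              apply ENNReal.ofReal_le_ofReal
              have heq2 : C2/(a + r) - C2/(a - r) = (-(2*r))*C2/((a + r)*(a - r)) := by
                rw [div_sub_div _ _ hne1 hne2]
                congr 1
                ring
              have hprod : (0:ℝ) < (a + r)*(a - r) := by nlinarith
              rw [heq2, abs_div, abs_mul, abs_neg,
                abs_of_pos (by linarith : (0:ℝ) < 2*r), abs_of_pos hprod,
                show (a + r)*(a - r) = a^2 - r^2 by ring, ← div_eq_mul_inv]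
              have h1 : (0:ℝ) < a^2 - 1 := by linarith
              have h2 : a^2 - 1 ≤ a^2 - r^2 := by nlinarith
              exact div_le_div_of_nonneg_left (by positivity) h1 h2
      · rw [if_neg hP]
        have hempty : {w : ℝ | w ≠ 0 ∧ |w| ≤ δ ∧ a - r < C2/w ∧ C2/w < a + r} = ∅ := by
          rw [Set.eq_empty_iff_forall_notMem]
          rintro w ⟨hw0, hwδ, h1, h2⟩
          have hwpos : 0 < |w| := abs_pos.mpr hw0
          have hcw : |C2|/δ ≤ |C2/w| := by
            rw [abs_div]
            rw [div_le_div_iff₀ hδ hwpos]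
            nlinarith [abs_nonneg C2]
          have hdd : |C2|/δ₀ ≤ |C2|/δ := by
            rw [div_le_div_iff₀ hδ₀pos hδ]; nlinarith [abs_nonneg C2]
          have habs : |C2/w - a| < r := abs_lt.mpr ⟨by linarith, by linarith⟩
          have htri := abs_sub_abs_le_abs_sub (C2/w) a
          rw [not_le] at hP
          linarith
        rw [hempty]
        simp
    -- assemble
    have hgnn2 : ∀ k : ℤ, 0 ≤ 2*r*|C2| *
        (if A₀ ≤ |π/2 - C3 + k*π| then ((π/2 - C3 + k*π)^2 - 1)⁻¹ else 0) :=
      fun k => mul_nonneg (by positivity) (hgnn k)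
    have hchain : volume {w : ℝ | w ∈ Set.Icc (-δ) δ ∧
        |Real.exp (C1 / |w|) * Real.cos (C2 / w + C3)| < C0} ≤
        ENNReal.ofReal (2*r*|C2| * K) := by
      calc volume {w : ℝ | w ∈ Set.Icc (-δ) δ ∧
            |Real.exp (C1 / |w|) * Real.cos (C2 / w + C3)| < C0}
          ≤ volume ({(0:ℝ)} ∪ ⋃ k : ℤ, {w : ℝ | w ≠ 0 ∧ |w| ≤ δ ∧
              (π/2 - C3 + k*π) - r < C2/w ∧ C2/w < (π/2 - C3 + k*π) + r}) :=
            measure_mono cover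
        _ ≤ volume {(0:ℝ)} + volume (⋃ k : ℤ, {w : ℝ | w ≠ 0 ∧ |w| ≤ δ ∧
              (π/2 - C3 + k*π) - r < C2/w ∧ C2/w < (π/2 - C3 + k*π) + r}) :=
            measure_union_le _ _
        _ = volume (⋃ k : ℤ, {w : ℝ | w ≠ 0 ∧ |w| ≤ δ ∧
              (π/2 - C3 + k*π) - r < C2/w ∧ C2/w < (π/2 - C3 + k*π) + r}) := by
            rw [Real.volume_singleton, zero_add]
        _ ≤ ∑' k : ℤ, volume {w : ℝ | w ≠ 0 ∧ |w| ≤ δ ∧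
              (π/2 - C3 + k*π) - r < C2/w ∧ C2/w < (π/2 - C3 + k*π) + r} :=
            measure_iUnion_le _
        _ ≤ ∑' k : ℤ, ENNReal.ofReal (2*r*|C2| *
              (if A₀ ≤ |π/2 - C3 + k*π| then ((π/2 - C3 + k*π)^2 - 1)⁻¹ else 0)) :=
            ENNReal.tsum_le_tsum bnd
        _ = ENNReal.ofReal (∑' k : ℤ, 2*r*|C2| *
              (if A₀ ≤ |π/2 - C3 + k*π| then ((π/2 - C3 + k*π)^2 - 1)⁻¹ else 0)) :=
            (ENNReal.ofReal_tsum_of_nonneg hgnn2 (hgs.mul_left _)).symm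
        _ = ENNReal.ofReal (2*r*|C2| * K) := by
            rw [tsum_mul_left, hK]
    have hfin := ENNReal.toReal_le_of_le_ofReal (by positivity) hchain
    have heq3 : 2*r*|C2| * K = π * C0 * Real.exp (-C1/δ) * |C2| * K := by
      rw [hr]; ring
    linarith

  -- identity: ratio = 1 - bad ratio
  have key1 : ∀ δ : ℝ, 0 < δ →
      (volume {w : ℝ | w ∈ Set.Icc (-δ) δ ∧
          C0 ≤ |Real.exp (C1 / |w|) * Real.cos (C2 / w + C3)|}).toReal / (2 * δ)
        = 1 - (volume {w : ℝ | w ∈ Set.Icc (-δ) δ ∧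
          |Real.exp (C1 / |w|) * Real.cos (C2 / w + C3)| < C0}).toReal / (2 * δ) := by
    intro δ hδ
    have hset : {w : ℝ | w ∈ Set.Icc (-δ) δ ∧
        C0 ≤ |Real.exp (C1 / |w|) * Real.cos (C2 / w + C3)|}
        = Set.Icc (-δ) δ \ {w : ℝ | w ∈ Set.Icc (-δ) δ ∧
        |Real.exp (C1 / |w|) * Real.cos (C2 / w + C3)| < C0} := by
      ext w
      simp only [Set.mem_diff, Set.mem_setOf_eq, not_and, not_lt]
      constructor
      · rintro ⟨h1, h2⟩; exact ⟨h1, fun _ => h2⟩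
      · rintro ⟨h1, h2⟩; exact ⟨h1, h2 h1⟩
    rw [hset, measure_diff (hBadsub δ) (hBadMeas δ).nullMeasurableSet (hBadfin δ)]
    rw [Real.volume_Icc]
    have h2δ : δ - -δ = 2*δ := by ring
    rw [h2δ]
    rw [ENNReal.toReal_sub_of_le (by
      rw [← h2δ, ← Real.volume_Icc]; exact measure_mono (hBadsub δ)) ENNReal.ofReal_ne_top]
    rw [ENNReal.toReal_ofReal (by linarith)]
    field_simp
  -- limit of the bound
  have hbound : Tendsto (fun δ : ℝ => (π * C0 * Real.exp (-C1/δ) * |C2| * K) / (2*δ))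
      (nhdsWithin 0 (Set.Ioi 0)) (nhds 0) := by
    have hu : Tendsto (fun δ : ℝ => C1/δ) (nhdsWithin 0 (Set.Ioi 0)) atTop := by
      have := tendsto_inv_nhdsGT_zero (𝕜 := ℝ)
      have h2 := Tendsto.const_mul_atTop hC1 this
      refine h2.congr fun δ => ?_
      rw [div_eq_mul_inv]
    have hbase := (tendsto_pow_mul_exp_neg_atTop_nhds_zero 1).comp hu
    have hconst : Tendsto (fun δ : ℝ => (π * C0 * |C2| * K / (2*C1)) *
        ((C1/δ)^1 * Real.exp (-(C1/δ)))) (nhdsWithin 0 (Set.Ioi 0)) (nhds 0) := by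
      have := hbase.const_mul (π * C0 * |C2| * K / (2*C1))
      simpa using this
    refine hconst.congr' ?_
    filter_upwards [eventually_mem_nhdsWithin] with δ (hδ : δ ∈ Set.Ioi 0)
    have hδ0 : δ ≠ 0 := ne_of_gt hδ
    rw [pow_one, neg_div]
    field_simp
  -- squeeze
  have hT : Tendsto (fun δ : ℝ => (volume {w : ℝ | w ∈ Set.Icc (-δ) δ ∧
      |Real.exp (C1 / |w|) * Real.cos (C2 / w + C3)| < C0}).toReal / (2 * δ))
      (nhdsWithin 0 (Set.Ioi 0)) (nhds 0) := by
    refine squeeze_zero' ?_ ?_ hbound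
    · filter_upwards [eventually_mem_nhdsWithin] with δ (hδ : δ ∈ Set.Ioi 0)
      have : (0:ℝ) < 2*δ := by simpa using by linarith [Set.mem_Ioi.mp hδ]
      positivity
    · have hmem : Set.Ioc (0:ℝ) δ₀ ∈ nhdsWithin (0:ℝ) (Set.Ioi 0) :=
        Ioc_mem_nhdsGT_of_mem ⟨le_refl 0, hδ₀pos⟩
      filter_upwards [hmem] with δ hδ
      have h1 := key2 δ hδ.1 hδ.2
      have h2 : (0:ℝ) < 2*δ := by linarith [hδ.1]
      exact le_trans ((div_le_div_iff_of_pos_right h2).mpr h1) (le_refl _)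
  have hfinal : Tendsto (fun δ : ℝ => 1 - (volume {w : ℝ | w ∈ Set.Icc (-δ) δ ∧
      |Real.exp (C1 / |w|) * Real.cos (C2 / w + C3)| < C0}).toReal / (2 * δ))
      (nhdsWithin 0 (Set.Ioi 0)) (nhds 1) := by
    have hc := (tendsto_const_nhds (x := (1:ℝ)) (f := nhdsWithin (0:ℝ) (Set.Ioi 0))).sub hT
    simpa using hc
  refine hfinal.congr' ?_
  filter_upwards [eventually_mem_nhdsWithin] with δ (hδ : δ ∈ Set.Ioi 0)
  exact (key1 δ (Set.mem_Ioi.mp hδ)).symm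
end

section
/- Let C0, γ1, γ2 be positive real constants, let a1, a2 be nonzero real numbers, and let c be a real number. Then the limit, as δ → 0⁺, of μ({ (w1, w2) ∈ (0, δ]² : exp(γ1/w1 + γ2/w2) · |cos(a1/w1 + a2/w2 + c)| ≥ C0 }) / δ² equals 1, where μ denotes the two-dimensional Lebesgue measure. -/
open MeasureTheory Filter Real

lemma near_half_pi (t ε : ℝ) (h : |Real.cos t| ≤ ε) :
    ∃ k : ℤ, |t - (π/2 + k*π)| ≤ π/2 * ε := by
  have hπ0 : (0:ℝ) < π := Real.pi_pos
  refine ⟨⌊t/π⌋, ?_⟩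
  have hfl1 : (⌊t/π⌋:ℝ) * π ≤ t := by
    have := Int.floor_le (t/π); rwa [le_div_iff₀ hπ0] at this
  have hfl2 : t < ((⌊t/π⌋:ℝ) + 1) * π := by
    have := Int.lt_floor_add_one (t/π); rwa [div_lt_iff₀ hπ0] at this
  obtain ⟨s, hs⟩ : ∃ x : ℝ, x = t - (π/2 + (⌊t/π⌋:ℝ)*π) := ⟨_, rfl⟩
  have hs1 : -(π/2) ≤ s := by rw [hs]; linarith
  have hs2 : s ≤ π/2 := by rw [hs]; nlinarith
  have habs : |s| ≤ π/2 := abs_le.mpr ⟨hs1, hs2⟩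
  have hcs : |Real.cos t| = |Real.sin s| := by
    have ht : t = (s + π/2) + (⌊t/π⌋:ℤ)*π := by rw [hs]; push_cast; ring
    rw [ht, Real.cos_add_int_mul_pi, Real.cos_add_pi_div_two, abs_mul, abs_neg]
    rcases Int.even_or_odd ⌊t/π⌋ with he | ho
    · rw [he.neg_one_zpow]; simp
    · rw [Odd.neg_one_zpow ho]; simp
  have hsins : |Real.sin s| = Real.sin |s| := by
    rcases abs_cases s with ⟨h1, h2⟩ | ⟨h1, h2⟩
    · rw [h1, abs_of_nonneg (Real.sin_nonneg_of_nonneg_of_le_pi h2 (by linarith))]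
    · rw [h1, Real.sin_neg]
      have h3 : 0 ≤ Real.sin (-s) :=
        Real.sin_nonneg_of_nonneg_of_le_pi (by linarith) (by linarith)
      rw [Real.sin_neg] at h3
      exact abs_of_nonpos (by linarith)
  have h1 : 2/π * |s| ≤ Real.sin |s| := Real.mul_le_sin (abs_nonneg _) habs
  have h3 : 2/π * |s| ≤ ε := h1.trans (by rw [← hsins, ← hcs]; exact h)
  rw [div_mul_eq_mul_div, div_le_iff₀ hπ0] at h3
  rw [← hs]
  linarith

lemma oneD_pos (a b δ ε : ℝ) (ha : 0 < a) (hδ : 0 < δ) (hT : (2 + 2*π) * δ ≤ a)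
    (hε : 0 < ε) (hε1 : ε ≤ 1/2) :
    volume {w : ℝ | w ∈ Set.Ioc 0 δ ∧ |Real.cos (a/w + b)| ≤ ε} ≤ ENNReal.ofReal (2*ε*δ) := by
  have hπ : (3:ℝ) < π := Real.pi_gt_three
  have hπ4 : π < 4 := by nlinarith [Real.pi_lt_d2]
  have hπ0 : (0:ℝ) < π := by linarith
  obtain ⟨T, hTdef⟩ : ∃ x : ℝ, x = a / δ := ⟨_, rfl⟩
  have hT' : 2 + 2*π ≤ T := by rw [hTdef, le_div_iff₀ hδ]; exact hT
  obtain ⟨r, hrdef⟩ : ∃ x : ℝ, x = π/2 * ε := ⟨_, rfl⟩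
  have hr0 : 0 < r := by rw [hrdef]; positivity
  have hr1 : r ≤ 1 := by rw [hrdef]; nlinarith
  obtain ⟨A, hAdef⟩ : ∃ x : ℝ, x = T - 1 := ⟨_, rfl⟩
  have hAπ : 0 < A - π := by rw [hAdef]; linarith
  obtain ⟨k0, hk0def⟩ : ∃ z : ℤ, z = ⌈(T - 1 - π/2 + b)/π⌉ := ⟨_, rfl⟩
  obtain ⟨cc, hccdef⟩ : ∃ f : ℕ → ℝ, ∀ n, f n = π/2 + ((k0:ℝ) + n)*π - b :=
    ⟨_, fun _ => rfl⟩
  have hcc : ∀ n : ℕ, A + n*π ≤ cc n := by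
    intro n
    have h1 : (T - 1 - π/2 + b)/π ≤ (k0:ℝ) := by rw [hk0def]; exact_mod_cast Int.le_ceil _
    rw [div_le_iff₀ hπ0] at h1
    rw [hccdef, hAdef]; nlinarith [n.cast_nonneg (α := ℝ)]
  have hccr : ∀ n : ℕ, A - π + n*π ≤ cc n - r ∧ 0 < A - π + n*π := by
    intro n
    have h1 := hcc n
    have hn : (0:ℝ) ≤ n := n.cast_nonneg
    exact ⟨by nlinarith, by nlinarith⟩
  -- subset claim
  have hsub : {w : ℝ | w ∈ Set.Ioc 0 δ ∧ |Real.cos (a/w + b)| ≤ ε} ⊆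
      ⋃ n : ℕ, Set.Icc (a/(cc n + r)) (a/(cc n - r)) := by
    rintro w ⟨⟨hw0, hwδ⟩, hcos⟩
    have hu : T ≤ a/w := by rw [hTdef]; exact div_le_div_of_nonneg_left ha.le hw0 hwδ
    have huw : 0 < a / w := by positivity
    obtain ⟨k, hk⟩ := near_half_pi (a/w + b) ε hcos
    rw [← hrdef] at hk
    obtain ⟨c, hcdef⟩ : ∃ x : ℝ, x = π/2 + (k:ℝ)*π - b := ⟨_, rfl⟩
    have habsc : |a/w - c| ≤ r := by
      have : a/w - c = a/w + b - (π/2 + (k:ℝ)*π) := by rw [hcdef]; ring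
      rw [this]; exact hk
    have hcl : a/w - r ≤ c := by have := (abs_le.mp habsc).2; linarith
    have hcu : c ≤ a/w + r := by have := (abs_le.mp habsc).1; linarith
    have hcA : T - 1 ≤ c := by linarith
    have hk0k : k0 ≤ k := by
      rw [hk0def]
      apply Int.ceil_le.mpr
      rw [div_le_iff₀ hπ0]
      rw [hcdef] at hcA; linarith
    refine Set.mem_iUnion.mpr ⟨(k - k0).toNat, ?_⟩
    have hccc : cc ((k - k0).toNat) = c := by
      rw [hccdef, hcdef]
      have h1 : (((k - k0).toNat : ℕ) : ℝ) = ((k:ℝ) - (k0:ℝ)) := by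
        have h2 : ((k - k0).toNat : ℤ) = k - k0 := Int.toNat_of_nonneg (by omega)
        rw [← Int.cast_natCast, h2]; push_cast; ring
      rw [h1]; ring
    rw [hccc]
    have hcr0 : 0 < c - r := by linarith
    have hwval : a / (a/w) = w := by
      rw [div_div_eq_mul_div, mul_comm, mul_div_assoc, div_self ha.ne', mul_one]
    constructor
    · calc a/(c+r) ≤ a/(a/w) := div_le_div_of_nonneg_left ha.le huw (by linarith)
        _ = w := hwval
    · calc w = a/(a/w) := hwval.symm
        _ ≤ a/(c-r) := div_le_div_of_nonneg_left ha.le hcr0 (by linarith)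
  -- measure estimate
  obtain ⟨L, hLdef⟩ : ∃ f : ℕ → ℝ, ∀ n, f n = a/(cc n - r) - a/(cc n + r) :=
    ⟨_, fun _ => rfl⟩
  obtain ⟨g, hgdef⟩ : ∃ f : ℕ → ℝ, ∀ n, f n = 1/(A - π + n*π) := ⟨_, fun _ => rfl⟩
  have hgpos : ∀ n : ℕ, 0 < A - π + n*π := fun n => (hccr n).2
  have hccpos : ∀ n : ℕ, 0 < cc n - r := by
    intro n; have h1 := (hccr n).1; have h2 := (hccr n).2; linarith
  have hLnonneg : ∀ n, 0 ≤ L n := by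
    intro n
    have h1 := hccpos n
    have : a/(cc n + r) ≤ a/(cc n - r) :=
      div_le_div_of_nonneg_left ha.le h1 (by linarith)
    rw [hLdef]; linarith
  have hLle : ∀ n : ℕ, L n ≤ (2*a*r/π) * (g n - g (n+1)) := by
    intro n
    have h1 := (hccr n).1
    have h2 := (hccr n).2
    have hd1 : 0 < cc n - r := hccpos n
    have hd2 : 0 < cc n + r := by linarith
    have hApos : 0 < A + n*π := by linarith
    have hX : (A - π + (n:ℝ)*π) ≠ 0 := (hgpos n).ne'
    have hZ : (A + (n:ℝ)*π) ≠ 0 := hApos.ne'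
    have hgn : g n - g (n+1) = π / ((A - π + n*π) * (A + n*π)) := by
      rw [hgdef, hgdef]
      push_cast
      have hE : A - π + ((n:ℝ)+1)*π = A + n*π := by ring
      rw [hE, div_sub_div _ _ hX hZ, div_eq_div_iff (mul_ne_zero hX hZ) (mul_ne_zero hX hZ)]
      ring
    have hLeq : L n = 2*a*r / ((cc n - r) * (cc n + r)) := by
      have hd1' : (cc n - r) ≠ 0 := hd1.ne'
      have hd2' : (cc n + r) ≠ 0 := hd2.ne'
      rw [hLdef]
      rw [div_sub_div _ _ hd1' hd2', div_eq_div_iff (mul_ne_zero hd1' hd2') (mul_ne_zero hd1' hd2')]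
      ring
    rw [hLeq, hgn]
    have hfac : (A - π + n*π) * (A + n*π) ≤ (cc n - r) * (cc n + r) := by
      have h3 := hcc n
      exact mul_le_mul h1 (by linarith) hApos.le hd1.le
    calc 2*a*r / ((cc n - r) * (cc n + r)) ≤ 2*a*r / ((A - π + n*π) * (A + n*π)) :=
          div_le_div_of_nonneg_left (by positivity) (by positivity) hfac
      _ = 2*a*r/π * (π / ((A - π + n*π) * (A + n*π))) := by
          rw [div_mul_div_comm, mul_comm (2*a*r) π, mul_div_mul_left _ _ hπ0.ne']
  have hsum : ∀ s : Finset ℕ, ∑ n ∈ s, L n ≤ 2*ε*δ := by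
    intro s
    obtain ⟨N, hN⟩ := s.exists_nat_subset_range
    have h1 : ∑ n ∈ s, L n ≤ ∑ n ∈ Finset.range N, L n :=
      Finset.sum_le_sum_of_subset_of_nonneg hN (fun i _ _ => hLnonneg i)
    have h2 : ∑ n ∈ Finset.range N, L n ≤ ∑ n ∈ Finset.range N, (2*a*r/π) * (g n - g (n+1)) :=
      Finset.sum_le_sum (fun i _ => hLle i)
    have h3 : ∑ n ∈ Finset.range N, (2*a*r/π) * (g n - g (n+1)) = (2*a*r/π) * (g 0 - g N) := by
      rw [← Finset.mul_sum, Finset.sum_range_sub' g N]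
    have hgN : 0 ≤ g N := by rw [hgdef]; positivity
    have hg0 : g 0 = 1/(A - π) := by rw [hgdef]; norm_num
    have h4 : (2*a*r/π) * (g 0 - g N) ≤ (2*a*r/π) * g 0 := by
      have hc : 0 ≤ 2*a*r/π := by positivity
      have := mul_nonneg hc hgN
      nlinarith [this]
    have h5 : (2*a*r/π) * g 0 ≤ 2*ε*δ := by
      have hA1 : a ≤ 2*δ*(A-π) := by
        have hδa : δ * (a/δ) = a := by field_simp
        rw [hAdef, hTdef]; linarith
      have e1 : (2*a*r/π) * g 0 = a*ε/(A-π) := by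
        rw [hg0, hrdef]; field_simp
      rw [e1, div_le_iff₀ hAπ]
      calc a*ε ≤ (2*δ*(A-π))*ε := mul_le_mul_of_nonneg_right hA1 hε.le
        _ = 2*ε*δ*(A-π) := by ring
    linarith
  have hμ1 : volume {w : ℝ | w ∈ Set.Ioc 0 δ ∧ |Real.cos (a/w + b)| ≤ ε} ≤
      ∑' n : ℕ, ENNReal.ofReal (L n) := by
    refine (measure_mono hsub).trans ?_
    refine le_trans (measure_iUnion_le _) ?_
    refine le_of_eq (tsum_congr fun n => ?_)
    rw [Real.volume_Icc, hLdef]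
  refine hμ1.trans ?_
  rw [ENNReal.tsum_eq_iSup_sum]
  refine iSup_le fun s => ?_
  rw [← ENNReal.ofReal_sum_of_nonneg (fun i _ => hLnonneg i)]
  exact ENNReal.ofReal_le_ofReal (hsum s)

lemma oneD (a b δ ε : ℝ) (ha : a ≠ 0) (hδ : 0 < δ) (hT : (2 + 2*π) * δ ≤ |a|)
    (hε : 0 < ε) (hε1 : ε ≤ 1/2) :
    volume {w : ℝ | w ∈ Set.Ioc 0 δ ∧ |Real.cos (a/w + b)| ≤ ε} ≤ ENNReal.ofReal (2*ε*δ) := by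
  rcases ha.lt_or_gt with h | h
  · have hset : {w : ℝ | w ∈ Set.Ioc 0 δ ∧ |Real.cos (a/w + b)| ≤ ε} =
        {w : ℝ | w ∈ Set.Ioc 0 δ ∧ |Real.cos (|a|/w + (-b))| ≤ ε} := by
      ext w
      have harg : |a|/w + (-b) = -(a/w + b) := by rw [abs_of_neg h]; ring
      simp only [Set.mem_setOf_eq, harg, Real.cos_neg]
    rw [hset]
    exact oneD_pos |a| (-b) δ ε (abs_pos.mpr ha) hδ hT hε hε1
  · exact oneD_pos a b δ ε h hδ (by rwa [abs_of_pos h] at hT) hε hε1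

lemma twoD (a1 a2 c δ ε : ℝ) (ha2 : a2 ≠ 0) (hδ : 0 < δ)
    (hT2 : (2 + 2*π) * δ ≤ |a2|) (hε : 0 < ε) (hε1 : ε ≤ 1/2) :
    volume {p : ℝ × ℝ | p ∈ Set.Ioc 0 δ ×ˢ Set.Ioc 0 δ ∧
      |Real.cos (a1/p.1 + a2/p.2 + c)| ≤ ε} ≤ ENNReal.ofReal (2*ε*δ^2) := by
  set B : Set (ℝ × ℝ) := {p : ℝ × ℝ | p ∈ Set.Ioc 0 δ ×ˢ Set.Ioc 0 δ ∧
      |Real.cos (a1/p.1 + a2/p.2 + c)| ≤ ε} with hBdef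
  have hmeas : MeasurableSet B := by
    have : B = (Set.Ioc 0 δ ×ˢ Set.Ioc 0 δ) ∩
        {p : ℝ × ℝ | |Real.cos (a1/p.1 + a2/p.2 + c)| ≤ ε} := rfl
    rw [this]
    refine (measurableSet_Ioc.prod measurableSet_Ioc).inter ?_
    apply measurableSet_le _ measurable_const
    apply Measurable.abs
    apply Real.measurable_cos.comp
    exact ((measurable_const.div measurable_fst).add
      (measurable_const.div measurable_snd)).add_const c
  rw [show (volume : Measure (ℝ × ℝ)) = (volume : Measure ℝ).prod volume from rfl,
    Measure.prod_apply hmeas]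
  have hslice : ∀ x : ℝ, volume (Prod.mk x ⁻¹' B) ≤
      Set.indicator (Set.Ioc 0 δ) (fun _ => ENNReal.ofReal (2*ε*δ)) x := by
    intro x
    by_cases hx : x ∈ Set.Ioc 0 δ
    · rw [Set.indicator_of_mem hx]
      have hpre : Prod.mk x ⁻¹' B =
          {y : ℝ | y ∈ Set.Ioc 0 δ ∧ |Real.cos (a2/y + (a1/x + c))| ≤ ε} := by
        ext y
        have harg : a1/x + a2/y + c = a2/y + (a1/x + c) := by ring
        simp only [hBdef, Set.mem_preimage, Set.mem_setOf_eq, Set.mem_prod, hx, true_and, harg]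
      rw [hpre]
      exact oneD a2 (a1/x + c) δ ε ha2 hδ hT2 hε hε1
    · have hpre : Prod.mk x ⁻¹' B = ∅ := by
        ext y
        simp only [hBdef, Set.mem_preimage, Set.mem_setOf_eq, Set.mem_prod, hx, false_and,
          Set.mem_empty_iff_false]
      rw [hpre, Set.indicator_of_notMem hx]
      simp
  calc ∫⁻ x, volume (Prod.mk x ⁻¹' B) ≤
      ∫⁻ x, Set.indicator (Set.Ioc 0 δ) (fun _ => ENNReal.ofReal (2*ε*δ)) x :=
        lintegral_mono hslice
    _ = ENNReal.ofReal (2*ε*δ) * volume (Set.Ioc 0 δ) :=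
        lintegral_indicator_const measurableSet_Ioc _
    _ = ENNReal.ofReal (2*ε*δ^2) := by
        rw [Real.volume_Ioc, sub_zero, ← ENNReal.ofReal_mul (by positivity)]
        ring_nf


theorem stmt_3 (C0 γ1 γ2 a1 a2 c : ℝ) (hC0 : 0 < C0) (hγ1 : 0 < γ1) (hγ2 : 0 < γ2)
    (ha1 : a1 ≠ 0) (ha2 : a2 ≠ 0) :
    Tendsto
      (fun δ : ℝ =>
        (volume {p : ℝ × ℝ | p ∈ Set.Ioc 0 δ ×ˢ Set.Ioc 0 δ ∧
          C0 ≤ Real.exp (γ1 / p.1 + γ2 / p.2) * |Real.cos (a1 / p.1 + a2 / p.2 + c)|}).toReal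
          / δ ^ 2)
      (nhdsWithin 0 (Set.Ioi 0)) (nhds 1) := by
  obtain ⟨E, hEdef⟩ : ∃ f : ℝ → ℝ, ∀ δ, f δ = C0 * Real.exp (-(γ1+γ2)/δ) := ⟨_, fun _ => rfl⟩
  have hEtend : Tendsto E (nhdsWithin 0 (Set.Ioi 0)) (nhds 0) := by
    have h1 : Tendsto (fun δ : ℝ => (γ1+γ2) * δ⁻¹) (nhdsWithin 0 (Set.Ioi 0)) atTop :=
      Tendsto.const_mul_atTop (by linarith) tendsto_inv_nhdsGT_zero
    have h2 : Tendsto (fun δ : ℝ => -(γ1+γ2)/δ) (nhdsWithin 0 (Set.Ioi 0)) atBot := by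
      have := tendsto_neg_atTop_atBot.comp h1
      refine this.congr fun δ => ?_
      simp only [Function.comp_apply]
      ring
    have h3 : Tendsto (fun δ : ℝ => Real.exp (-(γ1+γ2)/δ)) (nhdsWithin 0 (Set.Ioi 0)) (nhds 0) :=
      Real.tendsto_exp_atBot.comp h2
    have h4 := h3.const_mul C0
    rw [mul_zero] at h4
    exact h4.congr fun δ => (hEdef δ).symm
  have hg : Tendsto (fun δ : ℝ => 1 - 2 * E δ) (nhdsWithin 0 (Set.Ioi 0)) (nhds 1) := by
    have h6 := (tendsto_const_nhds (x := (1:ℝ))).sub (hEtend.const_mul 2)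
    simpa using h6
  refine tendsto_of_tendsto_of_tendsto_of_le_of_le' hg tendsto_const_nhds ?_ ?_
  · -- lower bound eventually
    have hδpos : ∀ᶠ δ : ℝ in nhdsWithin 0 (Set.Ioi 0), 0 < δ :=
      eventually_mem_nhdsWithin
    have hsmall1 : ∀ᶠ δ : ℝ in nhdsWithin 0 (Set.Ioi 0), (2 + 2*π) * δ ≤ |a1| := by
      have ht : Tendsto (fun δ : ℝ => (2 + 2*π) * δ) (nhdsWithin 0 (Set.Ioi 0)) (nhds 0) := by
        have h : Tendsto (fun δ : ℝ => (2 + 2*π) * δ) (nhds 0) (nhds ((2 + 2*π) * 0)) :=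
          (continuous_const.mul continuous_id).tendsto 0
        simpa using h.mono_left (nhdsWithin_le_nhds (s := Set.Ioi (0:ℝ)))
      exact (ht.eventually_lt_const (abs_pos.mpr ha1)).mono fun δ h => h.le
    have hsmall2 : ∀ᶠ δ : ℝ in nhdsWithin 0 (Set.Ioi 0), (2 + 2*π) * δ ≤ |a2| := by
      have ht : Tendsto (fun δ : ℝ => (2 + 2*π) * δ) (nhdsWithin 0 (Set.Ioi 0)) (nhds 0) := by
        have h : Tendsto (fun δ : ℝ => (2 + 2*π) * δ) (nhds 0) (nhds ((2 + 2*π) * 0)) :=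
          (continuous_const.mul continuous_id).tendsto 0
        simpa using h.mono_left (nhdsWithin_le_nhds (s := Set.Ioi (0:ℝ)))
      exact (ht.eventually_lt_const (abs_pos.mpr ha2)).mono fun δ h => h.le
    have hEsmall : ∀ᶠ δ : ℝ in nhdsWithin 0 (Set.Ioi 0), E δ ≤ 1/2 :=
      (hEtend.eventually_lt_const (by norm_num : (0:ℝ) < 1/2)).mono fun δ h => h.le
    filter_upwards [hδpos, hsmall1, hsmall2, hEsmall] with δ hδ hT1 hT2 hE12
    have hδ2 : (0:ℝ) < δ^2 := by positivity
    have hE0 : 0 < E δ := by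
      rw [hEdef δ]; positivity
    set S : Set (ℝ × ℝ) := {p : ℝ × ℝ | p ∈ Set.Ioc 0 δ ×ˢ Set.Ioc 0 δ ∧
        C0 ≤ Real.exp (γ1 / p.1 + γ2 / p.2) * |Real.cos (a1 / p.1 + a2 / p.2 + c)|} with hSdef
    set B : Set (ℝ × ℝ) := {p : ℝ × ℝ | p ∈ Set.Ioc 0 δ ×ˢ Set.Ioc 0 δ ∧
        |Real.cos (a1/p.1 + a2/p.2 + c)| ≤ E δ} with hBdef
    have hsq : volume (Set.Ioc (0:ℝ) δ ×ˢ Set.Ioc (0:ℝ) δ) = ENNReal.ofReal δ * ENNReal.ofReal δ := by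
      rw [show (volume : Measure (ℝ × ℝ)) = (volume : Measure ℝ).prod volume from rfl,
        Measure.prod_prod, Real.volume_Ioc, sub_zero]
    have hsqfin : volume (Set.Ioc (0:ℝ) δ ×ˢ Set.Ioc (0:ℝ) δ) ≠ ⊤ := by
      rw [hsq]; exact (ENNReal.mul_lt_top ENNReal.ofReal_lt_top ENNReal.ofReal_lt_top).ne
    have hsqtoReal : (volume (Set.Ioc (0:ℝ) δ ×ˢ Set.Ioc (0:ℝ) δ)).toReal = δ^2 := by
      rw [hsq, ENNReal.toReal_mul, ENNReal.toReal_ofReal hδ.le]; ring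
    have hS_le_sq : volume S ≤ volume (Set.Ioc (0:ℝ) δ ×ˢ Set.Ioc (0:ℝ) δ) :=
      measure_mono fun p hp => hp.1
    have hSfin : volume S ≠ ⊤ := (hS_le_sq.trans_lt hsqfin.lt_top).ne
    have hB := twoD a1 a2 c δ (E δ) ha2 hδ hT2 hE0 hE12
    have hBfin : volume B ≠ ⊤ := (hB.trans_lt ENNReal.ofReal_lt_top).ne
    have hcover : Set.Ioc (0:ℝ) δ ×ˢ Set.Ioc (0:ℝ) δ ⊆ S ∪ B := by
      intro p hp
      by_cases hfp : C0 ≤ Real.exp (γ1 / p.1 + γ2 / p.2) * |Real.cos (a1 / p.1 + a2 / p.2 + c)|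
      · exact Or.inl ⟨hp, hfp⟩
      · refine Or.inr ⟨hp, ?_⟩
        have hp1 : p.1 ∈ Set.Ioc 0 δ := hp.1
        have hp2 : p.2 ∈ Set.Ioc 0 δ := hp.2
        have hexp : Real.exp ((γ1+γ2)/δ) ≤ Real.exp (γ1/p.1 + γ2/p.2) := by
          apply Real.exp_le_exp.mpr
          rw [add_div]
          exact add_le_add (div_le_div_of_nonneg_left hγ1.le hp1.1 hp1.2)
            (div_le_div_of_nonneg_left hγ2.le hp2.1 hp2.2)
        have h3 : |Real.cos (a1/p.1 + a2/p.2 + c)| * Real.exp ((γ1+γ2)/δ) < C0 := by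
          calc |Real.cos (a1/p.1 + a2/p.2 + c)| * Real.exp ((γ1+γ2)/δ)
              ≤ |Real.cos (a1/p.1 + a2/p.2 + c)| * Real.exp (γ1/p.1 + γ2/p.2) :=
                mul_le_mul_of_nonneg_left hexp (abs_nonneg _)
            _ = Real.exp (γ1/p.1 + γ2/p.2) * |Real.cos (a1/p.1 + a2/p.2 + c)| := mul_comm _ _
            _ < C0 := not_le.mp hfp
        have h4 : |Real.cos (a1/p.1 + a2/p.2 + c)| < C0 / Real.exp ((γ1+γ2)/δ) :=
          (lt_div_iff₀ (Real.exp_pos _)).mpr h3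
        have h5 : C0 / Real.exp ((γ1+γ2)/δ) = E δ := by
          rw [hEdef δ, neg_div, Real.exp_neg, div_eq_mul_inv]
        rw [h5] at h4
        exact h4.le
    have hkey : δ^2 ≤ (volume S).toReal + 2*(E δ)*δ^2 := by
      have h1 : volume (Set.Ioc (0:ℝ) δ ×ˢ Set.Ioc (0:ℝ) δ) ≤ volume S + volume B :=
        (measure_mono hcover).trans (measure_union_le _ _)
      have h2 := ENNReal.toReal_mono (by
        exact ENNReal.add_ne_top.mpr ⟨hSfin, hBfin⟩) h1
      rw [ENNReal.toReal_add hSfin hBfin, hsqtoReal] at h2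
      have h6 : (volume B).toReal ≤ 2*(E δ)*δ^2 :=
        ENNReal.toReal_le_of_le_ofReal (by positivity) hB
      linarith
    rw [le_div_iff₀ hδ2]
    linarith
  · -- upper bound eventually
    filter_upwards [eventually_mem_nhdsWithin] with δ (hδ : δ ∈ Set.Ioi 0)
    have hδ' : (0:ℝ) < δ := hδ
    have hδ2 : (0:ℝ) < δ^2 := by positivity
    rw [div_le_one hδ2]
    have hsq : volume (Set.Ioc (0:ℝ) δ ×ˢ Set.Ioc (0:ℝ) δ) = ENNReal.ofReal δ * ENNReal.ofReal δ := by
      rw [show (volume : Measure (ℝ × ℝ)) = (volume : Measure ℝ).prod volume from rfl,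
        Measure.prod_prod, Real.volume_Ioc, sub_zero]
    have hsqfin : volume (Set.Ioc (0:ℝ) δ ×ˢ Set.Ioc (0:ℝ) δ) ≠ ⊤ := by
      rw [hsq]; exact (ENNReal.mul_lt_top ENNReal.ofReal_lt_top ENNReal.ofReal_lt_top).ne
    have h1 := ENNReal.toReal_mono hsqfin
      (measure_mono (fun p (hp : p ∈ {p : ℝ × ℝ | p ∈ Set.Ioc 0 δ ×ˢ Set.Ioc 0 δ ∧
          C0 ≤ Real.exp (γ1 / p.1 + γ2 / p.2) * |Real.cos (a1 / p.1 + a2 / p.2 + c)|}) => hp.1))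
    rw [hsq, ENNReal.toReal_mul, ENNReal.toReal_ofReal hδ'.le] at h1
    calc _ ≤ δ * δ := h1
      _ = δ^2 := by ring
end

section
/- Let d ≥ 1 be an integer, let C0 > 0, let γ1, …, γ_d be positive real constants, let a1, …, a_d be nonzero real numbers, and let c be a real number. Then the limit, as δ → 0⁺, of μ({ w ∈ (0, δ]^d : exp(Σ_{i=1}^d γ_i/w_i) · |cos(Σ_{i=1}^d a_i/w_i + c)| ≥ C0 }) / δ^d equals 1, where μ denotes the d-dimensional Lebesgue measure. -/
set_option maxHeartbeats 1000000

open MeasureTheory Filter Real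

lemma cos_small {θ ε : ℝ} (h : |Real.cos θ| < ε) :
    ∃ k : ℤ, |θ - (π/2 + k*π)| < π/2*ε := by
  have hπ := Real.pi_pos
  set k := round ((θ - π/2)/π) with hk
  refine ⟨k, ?_⟩
  set x := θ - π/2 - k*π with hx
  have hr : |x| ≤ π/2 := by
    have h1 : |(θ - π/2)/π - k| ≤ 1/2 := abs_sub_round _
    have h2 : x = ((θ - π/2)/π - k) * π := by
      rw [hx]
      field_simp
    rw [h2, abs_mul, abs_of_pos hπ]
    nlinarith
  have hsin : |Real.sin x| = |Real.cos θ| := by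
    have h3 : Real.sin (x + k*π) = (-1)^k * Real.sin x := Real.sin_add_int_mul_pi _ _
    have h4 : x + k*π = θ - π/2 := by ring
    rw [h4] at h3
    rw [Real.sin_sub_pi_div_two] at h3
    have h7 : |((-1:ℝ))^k| = 1 := by
      rcases Int.even_or_odd k with he | he
      · rw [he.neg_one_zpow]; simp
      · rw [Odd.neg_one_zpow he]; simp
    have h9 := congrArg abs h3
    rw [abs_neg, abs_mul, h7, one_mul] at h9
    exact h9.symm
  have jord : 2/π * |x| ≤ |Real.sin x| := by
    rcases le_or_gt 0 x with hx0 | hx0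
    · rw [abs_of_nonneg hx0]
      exact (Real.mul_le_sin hx0 (by rwa [abs_of_nonneg hx0] at hr)).trans (le_abs_self _)
    · rw [abs_of_neg hx0, ← abs_neg (Real.sin x), ← Real.sin_neg]
      exact (Real.mul_le_sin (by linarith) (by rw [abs_of_neg hx0] at hr; linarith)).trans
        (le_abs_self _)
  have h5 : θ - (π/2 + k*π) = x := by rw [hx]; ring
  rw [h5]
  have jord' : 2/π * |x| < ε := lt_of_le_of_lt (hsin ▸ jord) h
  have h8 : 2*|x| < π*ε := by
    calc 2*|x| = π * (2/π*|x|) := by field_simp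
    _ < π*ε := (mul_lt_mul_iff_right₀ hπ).2 jord'
  linarith


lemma oneD_s4 {A t δ ε : ℝ} (hA : 0 < A) (hδ : 0 < δ) (hε : 0 < ε)
    (h1 : π/2*ε ≤ 1) (h2 : π/2*ε ≤ A/(2*δ)) :
    volume {x : ℝ | x ∈ Set.Ioc 0 δ ∧ |Real.cos (A/x + t)| < ε} ≤
      ENNReal.ofReal (Real.sqrt (π/2*ε) * δ
        + (A/(π * (Real.sqrt (π/2*ε) * δ)) + 2) * (4*(π/2*ε)*δ^2/A)) := by
  have hπ := Real.pi_pos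
  set η := π/2*ε with hηdef
  have hη : 0 < η := by positivity
  set δ' := Real.sqrt η * δ with hδ'def
  have hsδ : 0 < Real.sqrt η := Real.sqrt_pos.2 hη
  have hδ' : 0 < δ' := mul_pos hsδ hδ
  set r := 2*η*δ^2/A with hrdef
  have hr : 0 < r := by positivity
  set q : ℤ → ℝ := fun k => π/2 + k*π - t with hq
  set kl : ℤ := ⌈(A/δ - η - π/2 + t)/π⌉ with hkl
  set ku : ℤ := ⌊(A/δ' + η - π/2 + t)/π⌋ with hku
  set K : Finset ℤ := Finset.Icc kl ku with hK
  have hsub : {x : ℝ | x ∈ Set.Ioc 0 δ ∧ |Real.cos (A/x + t)| < ε} ⊆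
      Set.Ioc 0 δ' ∪ ⋃ k ∈ K, Metric.ball (A / q k) r := by
    rintro x ⟨⟨hx0, hxδ⟩, hcos⟩
    by_cases hxδ' : x ≤ δ'
    · exact Or.inl ⟨hx0, hxδ'⟩
    push_neg at hxδ'
    right
    obtain ⟨k, hk⟩ := cos_small hcos
    have hqk : q k = π/2 + k*π - t := rfl
    have hk' : |A/x - q k| < η := by
      have : A/x + t - (π/2 + k*π) = A/x - q k := by rw [hqk]; ring
      rwa [this] at hk
    rw [abs_lt] at hk'
    have hu1 : A/δ ≤ A/x := by gcongr
    have hu2 : A/x < A/δ' := by gcongr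
    have hq1 : A/δ - η < q k := by linarith
    have hq2 : q k < A/δ' + η := by linarith
    have hmem : k ∈ K := by
      rw [hK, Finset.mem_Icc]
      constructor
      · rw [hkl]
        apply Int.ceil_le.2
        rw [div_le_iff₀ hπ]
        have : q k = π/2 + k*π - t := rfl
        nlinarith [hq1]
      · rw [hku]
        apply Int.le_floor.2
        rw [le_div_iff₀ hπ]
        have : q k = π/2 + k*π - t := rfl
        nlinarith [hq2]
    refine Set.mem_biUnion hmem ?_
    rw [Metric.mem_ball, Real.dist_eq]
    -- q k is positive and at least A/(2δ)
    have hhalf : A/δ - A/(2*δ) = A/(2*δ) := by field_simp; ring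
    have hq0 : A/(2*δ) ≤ q k := by linarith
    have hqpos : 0 < q k := lt_of_lt_of_le (by positivity) hq0
    have hupos : 0 < A/x := by positivity
    have hxval : x - A/q k = A * (q k - A/x) / ((A/x) * q k) := by
      field_simp
    rw [hxval, abs_div, abs_mul, abs_of_pos hA, abs_of_pos (mul_pos hupos hqpos)]
    have hden : A/δ * (A/(2*δ)) ≤ (A/x) * q k := by
      apply mul_le_mul hu1 hq0 (by positivity) hupos.le
    have habs : |q k - A/x| < η := by rw [abs_sub_comm]; exact abs_lt.2 ⟨by linarith, by linarith⟩
    calc A * |q k - A/x| / ((A/x) * q k) < A * η / ((A/x) * q k) := by gcongr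
      _ ≤ A * η / (A/δ * (A/(2*δ))) := by gcongr
      _ = r := by
          rw [hrdef]
          field_simp
  have hcard : (K.card : ℝ) ≤ A/(π*δ') + 2 := by
    have hc : K.card = (ku + 1 - kl).toNat := Int.card_Icc kl ku
    have hL : (ku : ℝ) ≤ (A/δ' + η - π/2 + t)/π := Int.floor_le _
    have hl : (A/δ - η - π/2 + t)/π ≤ (kl : ℝ) := Int.le_ceil _
    have hbound : ((ku + 1 - kl : ℤ) : ℝ) ≤ A/(π*δ') + 2 := by
      push_cast
      have e1 : (A/δ' + η - π/2 + t)/π - (A/δ - η - π/2 + t)/π = (A/δ' - A/δ + 2*η)/π := by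
        ring
      have e2 : (A/δ' - A/δ + 2*η)/π ≤ A/(π*δ') + 1 := by
        rw [div_le_iff₀ hπ]
        have : A/(π*δ')*π = A/δ' := by
          field_simp
        have hππ : (2:ℝ) ≤ π := by linarith [Real.pi_gt_three]
        have hAδ : 0 < A/δ := by positivity
        nlinarith
      nlinarith
    have : (K.card : ℝ) = ((ku + 1 - kl).toNat : ℝ) := by rw [hc]
    rw [this]
    rcases le_or_gt (ku + 1 - kl) 0 with hz | hz
    · rw [Int.toNat_of_nonpos hz]
      simp only [Nat.cast_zero]
      positivity
    · rw [← Int.cast_natCast, Int.toNat_of_nonneg hz.le]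
      exact hbound
  calc volume {x : ℝ | x ∈ Set.Ioc 0 δ ∧ |Real.cos (A/x + t)| < ε}
      ≤ volume (Set.Ioc 0 δ' ∪ ⋃ k ∈ K, Metric.ball (A / q k) r) := measure_mono hsub
    _ ≤ volume (Set.Ioc 0 δ') + volume (⋃ k ∈ K, Metric.ball (A / q k) r) := measure_union_le _ _
    _ ≤ ENNReal.ofReal δ' + ∑ k ∈ K, volume (Metric.ball (A / q k) r) := by
        gcongr
        · rw [Real.volume_Ioc]; simp
        · exact measure_biUnion_finset_le K _
    _ = ENNReal.ofReal δ' + K.card * ENNReal.ofReal (2*r) := by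
        simp [Real.volume_ball, Finset.sum_const, nsmul_eq_mul]
    _ ≤ ENNReal.ofReal δ' + ENNReal.ofReal (A/(π*δ') + 2) * ENNReal.ofReal (2*r) := by
        gcongr
        rw [← ENNReal.ofReal_natCast]
        exact ENNReal.ofReal_le_ofReal hcard
    _ = ENNReal.ofReal (δ' + (A/(π*δ') + 2) * (2*r)) := by
        rw [← ENNReal.ofReal_mul (by positivity), ← ENNReal.ofReal_add (by positivity) (by positivity)]
    _ ≤ ENNReal.ofReal (Real.sqrt η * δ + (A/(π * (Real.sqrt η * δ)) + 2) * (4*η*δ^2/A)) := by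
        apply ENNReal.ofReal_le_ofReal
        apply le_of_eq
        rw [hδ'def, hrdef]
        ring

lemma fubini_bound {n : ℕ} (δ M : ℝ) (hδ : 0 < δ) (hM : 0 ≤ M) (S : Set (Fin (n+1) → ℝ))
    (hS : MeasurableSet S)
    (h : ∀ y : Fin n → ℝ, volume {x : ℝ | Fin.insertNth 0 x y ∈ S} ≤ ENNReal.ofReal M)
    (h2 : ∀ w ∈ S, ∀ i, w i ∈ Set.Ioc 0 δ) :
    volume S ≤ ENNReal.ofReal M * ENNReal.ofReal (δ^n) := by
  set e := MeasurableEquiv.piFinSuccAbove (fun _ : Fin (n+1) => ℝ) 0 with he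
  have mp := measurePreserving_piFinSuccAbove (fun _ : Fin (n+1) => (volume : Measure ℝ)) 0
  have hT : MeasurableSet (e.symm ⁻¹' S) := e.symm.measurable hS
  have key : volume S = ∫⁻ y : Fin n → ℝ, volume {x : ℝ | Fin.insertNth 0 x y ∈ S} := by
    have h3 : (volume : Measure (Fin (n+1) → ℝ)) S
        = ((volume : Measure ℝ).prod (volume : Measure (Fin n → ℝ))) (e.symm ⁻¹' S) := by
      rw [show (volume : Measure (Fin (n+1) → ℝ)) = Measure.pi (fun _ => volume) from volume_pi]
      rw [show (volume : Measure (Fin n → ℝ)) = Measure.pi (fun _ => volume) from volume_pi]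
      exact ((mp.symm e).measure_preimage hS.nullMeasurableSet).symm
    rw [h3, Measure.prod_apply_symm hT]
    congr 1
  rw [key]
  have hbox : MeasurableSet (Set.pi Set.univ fun _ : Fin n => Set.Ioc (0:ℝ) δ) :=
    MeasurableSet.univ_pi fun _ => measurableSet_Ioc
  calc ∫⁻ y : Fin n → ℝ, volume {x : ℝ | Fin.insertNth 0 x y ∈ S}
      ≤ ∫⁻ y, (Set.pi Set.univ fun _ : Fin n => Set.Ioc (0:ℝ) δ).indicator
          (fun _ => ENNReal.ofReal M) y := by
        apply lintegral_mono
        intro y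
        by_cases hy : y ∈ Set.pi Set.univ fun _ : Fin n => Set.Ioc (0:ℝ) δ
        · rw [Set.indicator_of_mem hy]; exact h y
        · rw [Set.indicator_of_notMem hy]
          show volume {x : ℝ | Fin.insertNth 0 x y ∈ S} ≤ 0
          have : {x : ℝ | Fin.insertNth 0 x y ∈ S} = ∅ := by
            ext x
            simp only [Set.mem_setOf_eq, Set.mem_empty_iff_false, iff_false]
            intro hx
            apply hy
            intro j _
            have := h2 _ hx (Fin.succAbove 0 j)
            rwa [Fin.insertNth_apply_succAbove] at this
          rw [this]
          simp
    _ = ENNReal.ofReal M * volume (Set.pi Set.univ fun _ : Fin n => Set.Ioc (0:ℝ) δ) := by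
        rw [lintegral_indicator hbox]
        simp [lintegral_const, Measure.restrict_apply MeasurableSet.univ]
    _ ≤ ENNReal.ofReal M * ENNReal.ofReal (δ^n) := by
        rw [volume_pi_pi]
        simp only [Real.volume_Ioc, sub_zero, Finset.prod_const, Finset.card_univ,
          Fintype.card_fin]
        rw [← ENNReal.ofReal_pow hδ.le]

theorem stmt_4 (d : ℕ) (hd : 1 ≤ d) (C0 c : ℝ) (hC0 : 0 < C0)
    (γ a : Fin d → ℝ) (hγ : ∀ i, 0 < γ i) (ha : ∀ i, a i ≠ 0) :
    Tendsto
      (fun δ : ℝ =>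
        (volume {w : Fin d → ℝ | (∀ i, w i ∈ Set.Ioc 0 δ) ∧
          C0 ≤ Real.exp (∑ i, γ i / w i) * |Real.cos ((∑ i, a i / w i) + c)|}).toReal
          / δ ^ d)
      (nhdsWithin 0 (Set.Ioi 0)) (nhds 1) := by
  obtain ⟨n, rfl⟩ : ∃ n, d = n + 1 := ⟨d - 1, (Nat.succ_pred_eq_of_pos hd).symm⟩
  have hπ := Real.pi_pos
  set G := ∑ i, γ i with hGdef
  have hGpos : 0 < G := Finset.sum_pos (fun i _ => hγ i) Finset.univ_nonempty
  set A := |a 0| with hAdef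
  have hApos : 0 < A := abs_pos.2 (ha 0)
  set ε' : ℝ → ℝ := fun δ => C0 * Real.exp (-(G/δ)) with hε'def
  have hε'pos : ∀ δ, 0 < ε' δ := fun δ => mul_pos hC0 (Real.exp_pos _)
  set η : ℝ → ℝ := fun δ => π/2 * ε' δ with hηdef
  have hηpos : ∀ δ, 0 < η δ := fun δ => mul_pos (by positivity) (hε'pos δ)
  set Bf : ℝ → ℝ := fun δ => Real.sqrt (η δ) * δ
      + (A/(π * (Real.sqrt (η δ) * δ)) + 2) * (4*(η δ)*δ^2/A) with hBfdef
  -- limit facts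
  have hηlim : Tendsto η (nhdsWithin 0 (Set.Ioi 0)) (nhds 0) := by
    have l1 : Tendsto (fun δ : ℝ => G/δ) (nhdsWithin 0 (Set.Ioi 0)) atTop := by
      have l0 := tendsto_inv_nhdsGT_zero (𝕜 := ℝ)
      have := l0.const_mul_atTop hGpos
      exact this.congr fun x => (div_eq_mul_inv G x).symm
    have l2 : Tendsto (fun δ : ℝ => Real.exp (-(G/δ))) (nhdsWithin 0 (Set.Ioi 0)) (nhds 0) :=
      Real.tendsto_exp_neg_atTop_nhds_zero.comp l1
    have := (tendsto_const_nhds (x := π/2) (f := nhdsWithin (0:ℝ) (Set.Ioi 0))).mul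
      ((tendsto_const_nhds (x := C0)).mul l2)
    simpa using this
  have hδ0 : Tendsto (fun δ : ℝ => δ) (nhdsWithin 0 (Set.Ioi 0)) (nhds 0) :=
    tendsto_id.mono_left nhdsWithin_le_nhds
  have hsqrt : Tendsto (fun δ => Real.sqrt (η δ)) (nhdsWithin 0 (Set.Ioi 0)) (nhds 0) := by
    have := (Real.continuous_sqrt.tendsto 0).comp hηlim
    simpa [Function.comp_def] using this
  have hglim : Tendsto (fun δ => Real.sqrt (η δ) * (1 + 4/π) + 8*(η δ)*δ/A)
      (nhdsWithin 0 (Set.Ioi 0)) (nhds 0) := by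
    have t1 := hsqrt.mul_const (1 + 4/π)
    have t2 := ((hηlim.const_mul (8:ℝ)).mul hδ0).div_const A
    simpa using t1.add t2
  have hflim : Tendsto (fun δ => Bf δ / δ) (nhdsWithin 0 (Set.Ioi 0)) (nhds 0) := by
    apply hglim.congr'
    filter_upwards [self_mem_nhdsWithin] with δ hδ
    have hδpos : 0 < δ := hδ
    have hηd : 0 < η δ := hηpos δ
    set E := η δ with hE
    show Real.sqrt E * (1 + 4/π) + 8*E*δ/A
        = (Real.sqrt E * δ + (A/(π * (Real.sqrt E * δ)) + 2) * (4*E*δ^2/A)) / δ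
    set s := Real.sqrt E with hsdef
    have hs : 0 < s := Real.sqrt_pos.2 hηd
    have hss : s * s = E := Real.mul_self_sqrt hηd.le
    rw [← hss]
    field_simp
    ring
  -- eventual smallness
  have hev1 : ∀ᶠ δ in nhdsWithin (0:ℝ) (Set.Ioi 0), η δ ≤ 1 := by
    filter_upwards [hηlim.eventually_lt_const (by norm_num : (0:ℝ) < 1)] with δ h using h.le
  have hev2 : ∀ᶠ δ in nhdsWithin (0:ℝ) (Set.Ioi 0), 2*δ*(η δ) < A := by
    have : Tendsto (fun δ : ℝ => 2*δ*(η δ)) (nhdsWithin 0 (Set.Ioi 0)) (nhds 0) := by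
      have := (hδ0.const_mul (2:ℝ)).mul hηlim
      simpa using this
    exact this.eventually_lt_const hApos
  -- squeeze
  apply tendsto_of_tendsto_of_tendsto_of_le_of_le' (g := fun δ => 1 - Bf δ/δ)
    (h := fun _ => (1:ℝ))
  · simpa using (tendsto_const_nhds (x := (1:ℝ))).sub hflim
  · exact tendsto_const_nhds
  · -- lower bound
    filter_upwards [hev1, hev2, self_mem_nhdsWithin] with δ h1 h2 hδmem
    have hδpos : 0 < δ := hδmem
    have hpow : (0:ℝ) < δ^(n+1) := pow_pos hδpos _
    set box : Set (Fin (n+1) → ℝ) := {w | ∀ i, w i ∈ Set.Ioc 0 δ} with hboxdef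
    set good : Set (Fin (n+1) → ℝ) := {w | (∀ i, w i ∈ Set.Ioc 0 δ) ∧
      C0 ≤ Real.exp (∑ i, γ i / w i) * |Real.cos ((∑ i, a i / w i) + c)|} with hgooddef
    set badE : Set (Fin (n+1) → ℝ) := {w | (∀ i, w i ∈ Set.Ioc 0 δ) ∧
      Real.exp (∑ i, γ i / w i) * |Real.cos ((∑ i, a i / w i) + c)| < C0} with hbadEdef
    set badC : Set (Fin (n+1) → ℝ) := {w | (∀ i, w i ∈ Set.Ioc 0 δ) ∧
      |Real.cos ((∑ i, a i / w i) + c)| < ε' δ} with hbadCdef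
    -- measurability
    have hmes_sum : ∀ (b : Fin (n+1) → ℝ), Measurable fun w : Fin (n+1) → ℝ => ∑ i, b i / w i :=
      fun b => Finset.measurable_sum _ fun i _ => measurable_const.div (measurable_pi_apply i)
    have hbox_meas : MeasurableSet box := by
      have : box = Set.pi Set.univ (fun _ : Fin (n+1) => Set.Ioc (0:ℝ) δ) := by
        ext w; simp [Set.mem_pi, hboxdef]
      rw [this]
      exact MeasurableSet.univ_pi fun _ => measurableSet_Ioc
    have hcos_meas : Measurable fun w : Fin (n+1) → ℝ =>
        |Real.cos ((∑ i, a i / w i) + c)| :=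
      (Real.continuous_cos.measurable.comp ((hmes_sum a).add_const c)).abs
    have hbadC_meas : MeasurableSet badC := by
      rw [hbadCdef]
      have : badC = box ∩ {w | |Real.cos ((∑ i, a i / w i) + c)| < ε' δ} := rfl
      exact hbox_meas.inter (measurableSet_lt hcos_meas measurable_const)
    have hbadE_meas : MeasurableSet badE := by
      have : badE = box ∩ {w | Real.exp (∑ i, γ i / w i) *
          |Real.cos ((∑ i, a i / w i) + c)| < C0} := rfl
      rw [this]
      exact hbox_meas.inter (measurableSet_lt
        (((Real.continuous_exp.measurable.comp (hmes_sum γ))).mul hcos_meas) measurable_const)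
    -- badE ⊆ badC
    have hEC : badE ⊆ badC := by
      rintro w ⟨hw, hlt⟩
      refine ⟨hw, ?_⟩
      have hsum_ge : G/δ ≤ ∑ i, γ i / w i := by
        rw [hGdef, Finset.sum_div]
        refine Finset.sum_le_sum fun i _ => ?_
        have hwi := hw i
        gcongr
        · exact (hγ i).le
        · exact hwi.1
        · exact hwi.2
      rw [hε'def]
      show _ < C0 * Real.exp (-(G/δ))
      rw [Real.exp_neg, ← div_eq_mul_inv, lt_div_iff₀ (Real.exp_pos _)]
      calc |Real.cos ((∑ i, a i / w i) + c)| * Real.exp (G/δ)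
          ≤ |Real.cos ((∑ i, a i / w i) + c)| * Real.exp (∑ i, γ i / w i) := by
            gcongr
        _ = Real.exp (∑ i, γ i / w i) * |Real.cos ((∑ i, a i / w i) + c)| := mul_comm _ _
        _ < C0 := hlt
    -- slice bound and Fubini
    have hBfnonneg : 0 ≤ Bf δ := by
      have hs : 0 < Real.sqrt (η δ) := Real.sqrt_pos.2 (hηpos δ)
      have h1' : 0 < η δ := hηpos δ
      rw [hBfdef]
      positivity
    have hslice : ∀ y : Fin n → ℝ,
        volume {x : ℝ | Fin.insertNth 0 x y ∈ badC} ≤ ENNReal.ofReal (Bf δ) := by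
      intro y
      set ty : ℝ := (∑ j : Fin n, a (Fin.succAbove 0 j) / y j) + c with htydef
      set t' : ℝ := if 0 < a 0 then ty else -ty with ht'def
      have habs : ∀ x : ℝ, |Real.cos (a 0/x + ty)| = |Real.cos (A/x + t')| := by
        intro x
        rcases (ha 0).lt_or_gt with hneg | hpos
        · rw [ht'def, if_neg (not_lt.2 hneg.le), hAdef, abs_of_neg hneg]
          rw [show -(a 0)/x + -ty = -(a 0/x + ty) by ring, Real.cos_neg]
        · rw [ht'def, if_pos hpos, hAdef, abs_of_pos hpos]
      have hsubset : {x : ℝ | Fin.insertNth 0 x y ∈ badC} ⊆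
          {x : ℝ | x ∈ Set.Ioc 0 δ ∧ |Real.cos (A/x + t')| < ε' δ} := by
        rintro x ⟨hbox', hcos⟩
        have hx : x ∈ Set.Ioc 0 δ := by
          have := hbox' 0
          rwa [Fin.insertNth_apply_same] at this
        refine ⟨hx, ?_⟩
        have hsum : ∑ i, a i / (Fin.insertNth (α := fun _ : Fin (n+1) => ℝ) 0 x y) i
            = a 0 / x + ∑ j : Fin n, a (Fin.succAbove 0 j) / y j := by
          rw [Fin.sum_univ_succAbove (fun i => a i / (Fin.insertNth (α := fun _ : Fin (n+1) => ℝ) 0 x y) i) 0]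
          simp [Fin.insertNth_apply_same, Fin.insertNth_apply_succAbove]
        rw [hsum] at hcos
        have : a 0 / x + ∑ j : Fin n, a (Fin.succAbove 0 j) / y j + c = a 0/x + ty := by
          rw [htydef]; ring
        rw [this, habs] at hcos
        exact hcos
      calc volume {x : ℝ | Fin.insertNth 0 x y ∈ badC}
          ≤ volume {x : ℝ | x ∈ Set.Ioc 0 δ ∧ |Real.cos (A/x + t')| < ε' δ} :=
            measure_mono hsubset
        _ ≤ ENNReal.ofReal (Bf δ) := by
            have h2' : π/2 * ε' δ ≤ A/(2*δ) := by
              have : η δ ≤ A/(2*δ) := by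
                rw [le_div_iff₀ (by positivity)]
                calc η δ * (2*δ) = 2*δ*(η δ) := by ring
                  _ ≤ A := h2.le
              exact this
            exact oneD_s4 hApos hδpos (hε'pos δ) h1 h2'
    have hfub : volume badC ≤ ENNReal.ofReal (Bf δ) * ENNReal.ofReal (δ^n) :=
      fubini_bound δ (Bf δ) hδpos hBfnonneg badC hbadC_meas hslice (fun w hw => hw.1)
    -- volume computations
    have hbox_eq : box = Set.pi Set.univ (fun _ : Fin (n+1) => Set.Ioc (0:ℝ) δ) := by
      ext w; simp [Set.mem_pi, hboxdef]
    have hboxvol : volume box = ENNReal.ofReal (δ^(n+1)) := by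
      rw [hbox_eq, volume_pi_pi]
      simp only [Real.volume_Ioc, sub_zero, Finset.prod_const, Finset.card_univ,
        Fintype.card_fin]
      rw [← ENNReal.ofReal_pow hδpos.le]
    have hsubE : badE ⊆ box := fun w hw => hw.1
    have hfinE : volume badE ≠ ⊤ := by
      apply ne_top_of_le_ne_top _ (measure_mono hsubE)
      rw [hboxvol]
      exact ENNReal.ofReal_ne_top
    have hsplit : good = box \ badE := by
      ext w
      simp only [hgooddef, hbadEdef, hboxdef, Set.mem_setOf_eq, Set.mem_diff]
      constructor
      · rintro ⟨hb, hc⟩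
        exact ⟨hb, fun hcon => (not_lt.2 hc) hcon.2⟩
      · rintro ⟨hb, hnb⟩
        refine ⟨hb, ?_⟩
        by_contra hlt
        exact hnb ⟨hb, lt_of_not_ge hlt⟩
    have hgoodvol : volume good = ENNReal.ofReal (δ^(n+1)) - volume badE := by
      rw [hsplit, measure_diff hsubE hbadE_meas.nullMeasurableSet hfinE, hboxvol]
    have hleE : volume badE ≤ ENNReal.ofReal (δ^(n+1)) := by
      rw [← hboxvol]; exact measure_mono hsubE
    have h9 : (volume good).toReal = δ^(n+1) - (volume badE).toReal := by
      rw [hgoodvol, ENNReal.toReal_sub_of_le hleE ENNReal.ofReal_ne_top,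
        ENNReal.toReal_ofReal (by positivity)]
    have htB : (volume badE).toReal ≤ Bf δ * δ^n := by
      apply ENNReal.toReal_le_of_le_ofReal (by positivity)
      calc volume badE ≤ volume badC := measure_mono hEC
        _ ≤ ENNReal.ofReal (Bf δ) * ENNReal.ofReal (δ^n) := hfub
        _ = ENNReal.ofReal (Bf δ * δ^n) := (ENNReal.ofReal_mul hBfnonneg).symm
    show 1 - Bf δ/δ ≤ (volume good).toReal / δ^(n+1)
    rw [h9, sub_div, div_self hpow.ne']
    have hBfdiv : Bf δ/δ = (Bf δ*δ^n)/δ^(n+1) := by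
      rw [pow_succ]
      field_simp
    rw [hBfdiv]
    gcongr
  · -- upper bound
    filter_upwards [self_mem_nhdsWithin] with δ hδmem
    have hδpos : 0 < δ := hδmem
    have hpow : (0:ℝ) < δ^(n+1) := pow_pos hδpos _
    rw [div_le_one hpow]
    have hboxvol : volume {w : Fin (n+1) → ℝ | ∀ i, w i ∈ Set.Ioc 0 δ}
        = ENNReal.ofReal (δ^(n+1)) := by
      have : {w : Fin (n+1) → ℝ | ∀ i, w i ∈ Set.Ioc 0 δ}
          = Set.pi Set.univ (fun _ : Fin (n+1) => Set.Ioc (0:ℝ) δ) := by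
        ext w; simp [Set.mem_pi]
      rw [this, volume_pi_pi]
      simp only [Real.volume_Ioc, sub_zero, Finset.prod_const, Finset.card_univ,
        Fintype.card_fin]
      rw [← ENNReal.ofReal_pow hδpos.le]
    have hle : volume {w : Fin (n+1) → ℝ | (∀ i, w i ∈ Set.Ioc 0 δ) ∧
        C0 ≤ Real.exp (∑ i, γ i / w i) * |Real.cos ((∑ i, a i / w i) + c)|}
        ≤ ENNReal.ofReal (δ^(n+1)) := by
      rw [← hboxvol]
      exact measure_mono fun w hw => hw.1
    calc (volume {w : Fin (n+1) → ℝ | (∀ i, w i ∈ Set.Ioc 0 δ) ∧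
        C0 ≤ Real.exp (∑ i, γ i / w i) * |Real.cos ((∑ i, a i / w i) + c)|}).toReal
        ≤ (ENNReal.ofReal (δ^(n+1))).toReal :=
          ENNReal.toReal_mono ENNReal.ofReal_ne_top hle
      _ = δ^(n+1) := ENNReal.toReal_ofReal (by positivity)
end
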